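/- arXiv:1907.04109 — 2 statements merged into one kernel-verified Lean document; each statement's English description precedes it below -/
import Mathlib

section
/- Let f ∈ X + X²ℂ[[X]]. Suppose F ∈ X + X²ℂ[[X]] satisfies F = f·F' (i.e. F = 𝔗⁻¹f) and H ∈ X + X²ℂ[[X]] is the compositional inverse of F (H∘F = X). Define the binomial-type polynomials P_n ∈ ℂ[α] associated to 𝔗⁻¹f by P_n(α) := n!·Σ_{k=0}^{n} (αᵏ/k!)·coeff_n(Hᵏ), so that Σ_n P_n(α)Xⁿ/n! = exp(α·H(X)). For a power series u = Σ_k c_kXᵏ and a polynomial P, define u(D)P := Σ_k c_k·P^{(k)} (a finite sum), and let L : ℂ[α] → ℂ[α] be the linear operator L(P)(α) := α·(f(D)P)(α). Then for every monic polynomial q of degree n: n!·P_n = (L ∘ (L − 1·id) ∘ (L − 2·id) ∘ ⋯ ∘ (L − (n−1)·id))(q). In symbols: p_n^{𝔗⁻¹f}(α) = (1/n!)·(α·f(D))_n · q_n(α) for any monic q_n of degree n, where (·)_n is the falling factorial of the operator. -/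
open PowerSeries Finset

/-- Composition `f ∘ g` of formal power series (intended for `g` with zero constant
term). -/
noncomputable def pcomp (f g : PowerSeries ℂ) : PowerSeries ℂ :=
  PowerSeries.mk fun n => ∑ k ∈ range (n + 1), coeff k f * coeff n (g ^ k)

/-- `u(D)P = Σ_k (coeff_k u)·P⁽ᵏ⁾` for a power series `u` and a polynomial `P`
(a finite sum, since derivatives of order `> deg P` vanish). -/
noncomputable def opD (u : PowerSeries ℂ) (P : Polynomial ℂ) : Polynomial ℂ :=
  ∑ k ∈ range (P.natDegree + 1), coeff k u • (Polynomial.derivative^[k] P)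

/-- The operator `L : P(α) ↦ α·(f(D)P)(α)`. -/
noncomputable def LOp (f : PowerSeries ℂ) (P : Polynomial ℂ) : Polynomial ℂ :=
  Polynomial.X * opD f P

/-- The falling-factorial composition `(L)_n = L ∘ (L − 1·id) ∘ ⋯ ∘ (L − (n−1)·id)`;
the factor `L − (n−1)·id` acts first. -/
noncomputable def fallOp (L : Polynomial ℂ → Polynomial ℂ) : ℕ → Polynomial ℂ → Polynomial ℂ
  | 0, q => q
  | n + 1, q => fallOp L n (L q - (n : ℂ) • q)

namespace S17



lemma coeff_pow_zero_of_lt {g : PowerSeries ℂ} (hg : coeff 0 g = 0) {n k : ℕ} (h : n < k) :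
    coeff n (g ^ k) = 0 := by
  have hdvd : (X : PowerSeries ℂ) ^ k ∣ g ^ k :=
    pow_dvd_pow_of_dvd (X_dvd_iff.mpr (by rwa [← coeff_zero_eq_constantCoeff_apply])) k
  obtain ⟨t, ht⟩ := hdvd
  rw [ht, coeff_X_pow_mul', if_neg (not_le.mpr h)]

lemma coeff_pow_self {g : PowerSeries ℂ} (hg0 : coeff 0 g = 0) (hg1 : coeff 1 g = 1) :
    ∀ n, coeff n (g ^ n) = 1 := by
  intro n
  induction n with
  | zero => simp
  | succ m ih =>
    rw [pow_succ', coeff_mul]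
    rw [Finset.sum_eq_single (1, m)]
    · rw [hg1, ih, one_mul]
    · rintro ⟨i, j⟩ hmem hne
      rw [HasAntidiagonal.mem_antidiagonal] at hmem
      rcases Nat.lt_or_ge j m with hj | hj
      · rw [coeff_pow_zero_of_lt hg0 hj, mul_zero]
      · have : j = m ∨ j = m + 1 := by omega
        rcases this with rfl | rfl
        · exact absurd (by omega : i = 1) (by simpa using fun h => hne (by simp [h]))
        · have hi : i = 0 := by omega
          subst hi; rw [hg0, zero_mul]
    · intro h
      exact absurd (HasAntidiagonal.mem_antidiagonal.mpr (by omega)) h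

/-- extend the defining sum of `pcomp` to any range beyond `n`. -/
lemma coeff_pcomp {g a : PowerSeries ℂ} (hg : coeff 0 g = 0) {n N : ℕ} (h : n < N) :
    coeff n (pcomp a g) = ∑ k ∈ range N, coeff k a * coeff n (g ^ k) := by
  rw [pcomp, coeff_mk]
  apply Finset.sum_subset
  · exact Finset.range_subset_range.mpr h
  · intro k _ hk
    rw [Finset.mem_range, not_lt] at hk
    rw [coeff_pow_zero_of_lt hg (by omega), mul_zero]

lemma coeff_aeval_trunc (g a : PowerSeries ℂ) (N n : ℕ) :
    coeff n (Polynomial.aeval g (trunc N a)) =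
      ∑ k ∈ range N, coeff k a * coeff n (g ^ k) := by
  rw [trunc_apply, Nat.Ico_zero_eq_range]
  simp only [map_sum, Polynomial.aeval_monomial]
  refine Finset.sum_congr rfl fun k _ => ?_
  rw [show (algebraMap ℂ (PowerSeries ℂ)) (coeff k a) = C (coeff k a) from rfl,
    coeff_C_mul]

lemma coeff_pcomp_aeval {g a : PowerSeries ℂ} (hg : coeff 0 g = 0) {n N : ℕ} (h : n < N) :
    coeff n (pcomp a g) = coeff n (Polynomial.aeval g (trunc N a)) := by
  rw [coeff_pcomp hg h, coeff_aeval_trunc]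

lemma coeff_aeval_eq_zero {g : PowerSeries ℂ} (hg : coeff 0 g = 0) {p : Polynomial ℂ} {n : ℕ}
    (hp : ∀ i ≤ n, p.coeff i = 0) : coeff n (Polynomial.aeval g p) = 0 := by
  rw [Polynomial.aeval_eq_sum_range, map_sum]
  refine Finset.sum_eq_zero fun i _ => ?_
  rcases le_or_gt i n with hi | hi
  · rw [hp i hi, zero_smul, map_zero]
  · rw [coeff_smul, coeff_pow_zero_of_lt hg hi, smul_zero]


lemma pcomp_mul {g a b : PowerSeries ℂ} (hg : coeff 0 g = 0) :
    pcomp (a * b) g = pcomp a g * pcomp b g := by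
  ext n
  set N := n + 1 with hN
  have key : coeff n (Polynomial.aeval g (trunc N (a * b))) =
      coeff n (Polynomial.aeval g (trunc N a * trunc N b)) := by
    have hd : ∀ i ≤ n, (trunc N a * trunc N b - trunc N (a * b)).coeff i = 0 := by
      intro i hi
      rw [Polynomial.coeff_sub, coeff_trunc, if_pos (show i < N by omega),
        coeff_mul_eq_coeff_trunc_mul_trunc a b (show i < N by omega),
        ← Polynomial.coe_mul, Polynomial.coeff_coe, sub_self]
    have h0 := coeff_aeval_eq_zero hg hd
    rw [map_sub, map_sub, sub_eq_zero] at h0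
    exact h0.symm
  rw [coeff_pcomp_aeval (N := N) hg (by omega), key, map_mul, coeff_mul, coeff_mul]
  refine Finset.sum_congr rfl fun p hp => ?_
  rw [HasAntidiagonal.mem_antidiagonal] at hp
  rw [← coeff_pcomp_aeval (N := N) hg (show p.1 < N by omega),
    ← coeff_pcomp_aeval (N := N) hg (show p.2 < N by omega)]

lemma pcomp_one {g : PowerSeries ℂ} : pcomp 1 g = 1 := by
  ext n
  rw [pcomp, coeff_mk]
  rw [Finset.sum_eq_single 0]
  · simp
  · intro k _ hk
    rw [coeff_one, if_neg hk, zero_mul]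
  · simp

lemma pcomp_pow {g a : PowerSeries ℂ} (hg : coeff 0 g = 0) (m : ℕ) :
    pcomp (a ^ m) g = (pcomp a g) ^ m := by
  induction m with
  | zero => simpa using pcomp_one
  | succ k ih => rw [pow_succ, pow_succ, pcomp_mul hg, ih]

lemma pcomp_X {g : PowerSeries ℂ} (hg : coeff 0 g = 0) : pcomp X g = g := by
  ext n
  rw [pcomp, coeff_mk]
  rw [Finset.sum_eq_single 1]
  · rcases Nat.eq_zero_or_pos n with rfl | hn
    · simpa using hg.symm
    · simp
  · intro k _ hk
    rw [coeff_X, if_neg hk, zero_mul]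
  · intro h
    rw [Finset.mem_range, not_lt] at h
    have hn0 : n = 0 := by omega
    subst hn0
    simpa using hg

lemma pcomp_X_right (a : PowerSeries ℂ) : pcomp a X = a := by
  ext n
  rw [pcomp, coeff_mk]
  rw [Finset.sum_eq_single n]
  · rw [coeff_X_pow, if_pos rfl, mul_one]
  · intro k _ hk
    rw [coeff_X_pow, if_neg (fun h => hk h.symm), mul_zero]
  · intro h
    exact absurd (Finset.mem_range.mpr (by omega)) h


lemma pcomp_inj {F a b : PowerSeries ℂ} (hF0 : coeff 0 F = 0) (hF1 : coeff 1 F = 1)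
    (h : pcomp a F = pcomp b F) : a = b := by
  ext n
  induction n using Nat.strong_induction_on with
  | _ n ih =>
    have hc := congrArg (coeff n) h
    rw [pcomp, pcomp, coeff_mk, coeff_mk, Finset.sum_range_succ, Finset.sum_range_succ] at hc
    rw [Finset.sum_congr rfl (fun k hk =>
      (by rw [ih k (mem_range.mp hk)] :
        coeff k a * coeff n (F ^ k) = coeff k b * coeff n (F ^ k)))] at hc
    rw [coeff_pow_self hF0 hF1 n, mul_one, mul_one] at hc
    exact add_left_cancel hc

lemma aeval_derivative (g : PowerSeries ℂ) (p : Polynomial ℂ) :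
    d⁄dX ℂ (Polynomial.aeval g p) = (Polynomial.aeval g (Polynomial.derivative p)) * d⁄dX ℂ g := by
  induction p using Polynomial.induction_on' with
  | add p q hp hq => simp only [map_add, hp, hq, add_mul]
  | monomial m c =>
    cases m with
    | zero => simp
    | succ m =>
      rw [Polynomial.aeval_monomial, Polynomial.derivative_monomial, Polynomial.aeval_monomial]
      have halg : ∀ x : ℂ, (algebraMap ℂ (PowerSeries ℂ)) x = C x := fun _ => rfl
      rw [halg, halg, Derivation.leibniz, Derivation.leibniz_pow, PowerSeries.derivative_C]
      simp only [smul_eq_mul, nsmul_eq_mul, mul_zero, add_zero, Nat.add_sub_cancel,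
        zero_mul, smul_zero]
      rw [map_mul (C (R := ℂ)), map_natCast (C (R := ℂ))]
      push_cast
      ring

lemma derivative_pcomp {g a : PowerSeries ℂ} (hg : coeff 0 g = 0) :
    d⁄dX ℂ (pcomp a g) = pcomp (d⁄dX ℂ a) g * d⁄dX ℂ g := by
  ext n
  have l1 : coeff n (d⁄dX ℂ (pcomp a g)) =
      coeff n (d⁄dX ℂ (Polynomial.aeval g (trunc (n + 2) a))) := by
    rw [PowerSeries.coeff_derivative, PowerSeries.coeff_derivative,
      coeff_pcomp_aeval (N := n + 2) hg (by omega)]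
  rw [l1, aeval_derivative, ← trunc_derivative, coeff_mul, coeff_mul]
  refine Finset.sum_congr rfl fun p hp => ?_
  rw [HasAntidiagonal.mem_antidiagonal] at hp
  rw [← coeff_pcomp_aeval (N := n + 1) hg (show p.1 < n + 1 by omega)]

lemma pcomp_assoc {a b c : PowerSeries ℂ} (hb : coeff 0 b = 0) (hc : coeff 0 c = 0) :
    pcomp (pcomp a b) c = pcomp a (pcomp b c) := by
  have hbc : coeff 0 (pcomp b c) = 0 := by
    rw [pcomp, coeff_mk]
    simp [hb]
  ext n
  rw [show coeff n (pcomp (pcomp a b) c) =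
      ∑ k ∈ range (n + 1), coeff k (pcomp a b) * coeff n (c ^ k) from by rw [pcomp, coeff_mk]]
  rw [Finset.sum_congr rfl (fun k hk => by
    rw [coeff_pcomp (N := n + 1) hb (mem_range.mp hk), Finset.sum_mul] :
    ∀ k ∈ range (n+1), _ = ∑ m ∈ range (n + 1), coeff m a * coeff k (b ^ m) * coeff n (c ^ k))]
  rw [Finset.sum_comm, coeff_pcomp (N := n + 1) hbc (by omega)]
  refine Finset.sum_congr rfl fun m _ => ?_
  rw [← pcomp_pow hc m, coeff_pcomp (N := n + 1) hc (by omega), Finset.mul_sum]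
  exact Finset.sum_congr rfl fun k _ => by ring


lemma comp_f_H (hf0 : coeff 0 f = 0)
    (hF0 : coeff 0 F = 0) (hF1 : coeff 1 F = 1) (hH0 : coeff 0 H = 0)
    (hF : F = f * d⁄dX ℂ F) (hH : pcomp H F = X) :
    pcomp f H = X * d⁄dX ℂ H := by
  have hD : pcomp (d⁄dX ℂ H) F * d⁄dX ℂ F = 1 := by
    have h1 := derivative_pcomp (g := F) (a := H) hF0
    rw [hH] at h1
    simpa using h1.symm
  apply pcomp_inj hF0 hF1
  calc pcomp (pcomp f H) F = pcomp f (pcomp H F) := pcomp_assoc hH0 hF0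
    _ = f := by rw [hH, pcomp_X_right]
    _ = f * (pcomp (d⁄dX ℂ H) F * d⁄dX ℂ F) := by rw [hD, mul_one]
    _ = (f * d⁄dX ℂ F) * pcomp (d⁄dX ℂ H) F := by ring
    _ = F * pcomp (d⁄dX ℂ H) F := by rw [← hF]
    _ = pcomp (X * d⁄dX ℂ H) F := by rw [pcomp_mul hF0, pcomp_X hF0]

/-- The key coefficient identity. -/
lemma key_identity (hf0 : coeff 0 f = 0)
    (hF0 : coeff 0 F = 0) (hF1 : coeff 1 F = 1) (hH0 : coeff 0 H = 0)
    (hF : F = f * d⁄dX ℂ F) (hH : pcomp H F = X) (n j : ℕ) (hj : 1 ≤ j) :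
    (j : ℂ) * ∑ m ∈ range (n + 1), coeff m f * coeff n (H ^ (j - 1 + m)) =
      (n : ℂ) * coeff n (H ^ j) := by
  -- step A : the sum is the coefficient of `H^(j-1) * pcomp f H`
  have hA : ∑ m ∈ range (n + 1), coeff m f * coeff n (H ^ (j - 1 + m)) =
      coeff n (H ^ (j - 1) * pcomp f H) := by
    have h1 : H ^ (j - 1) * pcomp f H = pcomp (X ^ (j - 1) * f) H := by
      rw [pcomp_mul hH0, pcomp_pow hH0, pcomp_X hH0]
    rw [h1, coeff_pcomp (N := n + 1) hH0 (by omega)]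
    -- now reindex
    rw [Finset.sum_congr rfl (fun k _ => by
      rw [coeff_X_pow_mul'] :
      ∀ k ∈ range (n + 1), coeff k (X ^ (j-1) * f) * coeff n (H ^ k) =
        (if j - 1 ≤ k then coeff (k - (j-1)) f else 0) * coeff n (H ^ k))]
    -- restrict to `Ico (j-1) (n+1)`
    rw [show (∑ k ∈ range (n + 1),
        (if j - 1 ≤ k then coeff (k - (j-1)) f else 0) * coeff n (H ^ k)) =
        ∑ k ∈ Ico (j - 1) (n + 1),
        (if j - 1 ≤ k then coeff (k - (j-1)) f else 0) * coeff n (H ^ k) from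
      (Finset.sum_subset (by
        intro x hx
        rw [Finset.mem_Ico] at hx
        exact Finset.mem_range.mpr hx.2)
        (fun x hx hx2 => by
          rw [Finset.mem_Ico, not_and_or] at hx2
          rw [Finset.mem_range] at hx
          rcases hx2 with h | h
          · rw [if_neg (by omega), zero_mul]
          · omega)).symm]
    rw [Finset.sum_Ico_eq_sum_range]
    rw [Finset.sum_congr rfl (fun i _ => by
      rw [if_pos (by omega), Nat.add_sub_cancel_left, add_comm] :
      ∀ i ∈ range (n + 1 - (j - 1)),
        (if j - 1 ≤ j - 1 + i then coeff (j - 1 + i - (j-1)) f else 0) * coeff n (H ^ (j-1+i))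
        = coeff i f * coeff n (H ^ (j - 1 + i)))]
    refine (Finset.sum_subset (by
        intro x hx
        rw [Finset.mem_range] at hx ⊢
        omega)
      (fun x hx hx2 => by
        rw [Finset.mem_range] at hx hx2
        rw [coeff_pow_zero_of_lt hH0 (show n < j - 1 + x by omega), mul_zero])).symm
  rw [hA, comp_f_H hf0 hF0 hF1 hH0 hF hH]
  have hcomm : H ^ (j - 1) * (X * d⁄dX ℂ H) = X * (H ^ (j - 1) * d⁄dX ℂ H) := by ring
  rw [hcomm]
  cases n with
  | zero =>
    have h0 : coeff 0 (X * (H ^ (j - 1) * d⁄dX ℂ H)) = 0 := by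
      rw [coeff_zero_eq_constantCoeff_apply, map_mul, constantCoeff_X, zero_mul]
    rw [h0]
    simp
  | succ m =>
    have hpow : d⁄dX ℂ (H ^ j) = j • (H ^ (j - 1) * d⁄dX ℂ H) := by
      rw [Derivation.leibniz_pow]
      rw [smul_eq_mul]
    have : (j : ℂ) * coeff (m + 1) (X * (H ^ (j - 1) * d⁄dX ℂ H)) =
        coeff (m + 1) (X * d⁄dX ℂ (H ^ j)) := by
      rw [hpow, coeff_succ_X_mul, coeff_succ_X_mul, map_nsmul, nsmul_eq_mul]
    rw [this, coeff_succ_X_mul, PowerSeries.coeff_derivative]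
    push_cast
    ring


/-- The binomial-type polynomials. -/
noncomputable def Pb (H : PowerSeries ℂ) (n : ℕ) : Polynomial ℂ :=
  (n.factorial : ℂ) •
    ∑ k ∈ range (n + 1),
      (coeff n (H ^ k) / (k.factorial : ℂ)) • (Polynomial.X ^ k : Polynomial ℂ)

lemma coeff_Pb {H : PowerSeries ℂ} (hH0 : coeff 0 H = 0) (n j : ℕ) :
    (Pb H n).coeff j = (n.factorial : ℂ) * coeff n (H ^ j) / (j.factorial : ℂ) := by
  rw [Pb, Polynomial.coeff_smul, Polynomial.finset_sum_coeff]
  rw [Finset.sum_congr rfl (fun k _ => by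
    rw [Polynomial.coeff_smul, Polynomial.coeff_X_pow, smul_eq_mul, mul_ite, mul_one, mul_zero] :
    ∀ k ∈ range (n+1), ((coeff n (H ^ k) / (k.factorial : ℂ)) •
        (Polynomial.X ^ k : Polynomial ℂ)).coeff j
      = if j = k then coeff n (H ^ k) / (k.factorial : ℂ) else 0)]
  rw [Finset.sum_ite_eq (range (n+1)) j _]
  by_cases hj : j ∈ range (n + 1)
  · rw [if_pos hj, smul_eq_mul]; ring
  · rw [if_neg hj, smul_eq_mul, mul_zero,
      coeff_pow_zero_of_lt hH0 (show n < j by simpa [Nat.lt_succ_iff, not_le] using hj),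
      mul_zero, zero_div]

lemma Pb_natDegree {H : PowerSeries ℂ} (hH0 : coeff 0 H = 0) (hH1 : coeff 1 H = 1) (n : ℕ) :
    (Pb H n).natDegree = n ∧ (Pb H n).Monic := by
  have htop : (Pb H n).coeff n = 1 := by
    rw [coeff_Pb hH0, coeff_pow_self hH0 hH1 n, mul_one,
      div_self (by exact_mod_cast n.factorial_ne_zero)]
  have hle : (Pb H n).natDegree ≤ n := by
    apply Polynomial.natDegree_le_iff_coeff_eq_zero.mpr
    intro m hm
    rw [coeff_Pb hH0, coeff_pow_zero_of_lt hH0 hm, mul_zero, zero_div]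
  have hmon : (Pb H n).Monic := Polynomial.monic_of_natDegree_le_of_coeff_eq_one n hle htop
  exact ⟨le_antisymm hle (Polynomial.le_natDegree_of_ne_zero (by rw [htop]; norm_num)), hmon⟩

lemma opD_eq_sum (u : PowerSeries ℂ) (P : Polynomial ℂ) {N : ℕ} (hN : P.natDegree ≤ N) :
    opD u P = ∑ k ∈ range (N + 1), coeff k u • (Polynomial.derivative^[k] P) := by
  rw [opD]
  apply Finset.sum_subset (by rw [Finset.range_subset_range]; omega)
  intro k _ hk
  rw [Finset.mem_range, not_lt] at hk
  rw [Polynomial.iterate_derivative_eq_zero (show P.natDegree < k by omega), smul_zero]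

lemma coeff_LOp_zero (u : PowerSeries ℂ) (P : Polynomial ℂ) : (LOp u P).coeff 0 = 0 := by
  rw [LOp, Polynomial.mul_coeff_zero, Polynomial.coeff_X_zero, zero_mul]

lemma coeff_LOp_succ (u : PowerSeries ℂ) (P : Polynomial ℂ) (j : ℕ) :
    (LOp u P).coeff (j + 1) =
      ∑ k ∈ range (P.natDegree + 1),
        coeff k u * (((j + k).descFactorial k : ℂ) * P.coeff (j + k)) := by
  rw [LOp, Polynomial.coeff_X_mul, opD, Polynomial.finset_sum_coeff]
  refine Finset.sum_congr rfl fun k _ => ?_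
  rw [Polynomial.coeff_smul, Polynomial.coeff_iterate_derivative, smul_eq_mul, nsmul_eq_mul]


variable {f : PowerSeries ℂ}

lemma LOp_coeff_high (hf0 : coeff 0 f = 0) {q : Polynomial ℂ} {j : ℕ}
    (hj : q.natDegree < j) : (LOp f q).coeff j = 0 := by
  obtain ⟨i, rfl⟩ : ∃ i, j = i + 1 := ⟨j - 1, by omega⟩
  rw [coeff_LOp_succ]
  refine Finset.sum_eq_zero fun k _ => ?_
  rcases Nat.eq_zero_or_pos k with rfl | hk
  · rw [hf0, zero_mul]
  · rw [Polynomial.coeff_eq_zero_of_natDegree_lt (show q.natDegree < i + k by omega),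
      mul_zero, mul_zero]

lemma LOp_coeff_nd (hf0 : coeff 0 f = 0) (hf1 : coeff 1 f = 1) (q : Polynomial ℂ) :
    (LOp f q).coeff q.natDegree = (q.natDegree : ℂ) * q.leadingCoeff := by
  cases hd : q.natDegree with
  | zero => rw [coeff_LOp_zero]; norm_num
  | succ d =>
    rw [coeff_LOp_succ, hd]
    rw [Finset.sum_eq_single 1]
    · rw [hf1, one_mul, Nat.descFactorial_one, Polynomial.leadingCoeff, hd]
    · intro k hk hk1
      rcases Nat.eq_zero_or_pos k with rfl | hkpos
      · rw [hf0, zero_mul]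
      · have : d + 1 < d + k := by omega
        rw [Polynomial.coeff_eq_zero_of_natDegree_lt (by omega), mul_zero, mul_zero]
    · intro h
      exact absurd (Finset.mem_range.mpr (by omega)) h

lemma itd_add (k : ℕ) (a b : Polynomial ℂ) :
    Polynomial.derivative^[k] (a + b) =
      Polynomial.derivative^[k] a + Polynomial.derivative^[k] b := by
  induction k generalizing a b with
  | zero => rfl
  | succ k ih =>
    rw [Function.iterate_succ_apply, Function.iterate_succ_apply, Function.iterate_succ_apply,
      map_add]
    exact ih _ _

lemma LOp_zero : LOp f 0 = 0 := by
  rw [LOp, opD]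
  simp

lemma LOp_add (a b : Polynomial ℂ) : LOp f (a + b) = LOp f a + LOp f b := by
  set N := max a.natDegree b.natDegree with hN
  rw [LOp, LOp, LOp,
    opD_eq_sum f (a + b) (N := N) (Polynomial.natDegree_add_le a b),
    opD_eq_sum f a (N := N) (le_max_left _ _), opD_eq_sum f b (N := N) (le_max_right _ _)]
  simp only [itd_add, smul_add, Finset.sum_add_distrib, mul_add]

lemma LOp_smul (c : ℂ) (a : Polynomial ℂ) : LOp f (c • a) = c • LOp f a := by
  rw [LOp, LOp, opD_eq_sum f (c • a) (Polynomial.natDegree_smul_le c a), opD_eq_sum f a le_rfl]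
  simp only [Polynomial.iterate_derivative_smul, smul_comm (coeff _ f) c]
  rw [← Finset.smul_sum, mul_smul_comm]

lemma LOp_sub (a b : Polynomial ℂ) : LOp f (a - b) = LOp f a - LOp f b := by
  have h : a - b = a + (-1 : ℂ) • b := by
    rw [neg_one_smul]; ring
  rw [h, LOp_add, LOp_smul, neg_one_smul]
  ring

lemma fallOp_add : ∀ (n : ℕ) (a b : Polynomial ℂ),
    fallOp (LOp f) n (a + b) = fallOp (LOp f) n a + fallOp (LOp f) n b := by
  intro n
  induction n with
  | zero => intro a b; rfl
  | succ n ih =>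
    intro a b
    show fallOp (LOp f) n _ = _
    rw [LOp_add, smul_add, add_sub_add_comm, ih]
    rfl

lemma fallOp_smul : ∀ (n : ℕ) (c : ℂ) (a : Polynomial ℂ),
    fallOp (LOp f) n (c • a) = c • fallOp (LOp f) n a := by
  intro n
  induction n with
  | zero => intro c a; rfl
  | succ n ih =>
    intro c a
    show fallOp (LOp f) n _ = _
    rw [LOp_smul, smul_comm (n : ℂ) c, ← smul_sub, ih]
    rfl

lemma fallOp_vanish (hf0 : coeff 0 f = 0) (hf1 : coeff 1 f = 1) :
    ∀ (n : ℕ) (q : Polynomial ℂ), q.degree < (n : ℕ) → fallOp (LOp f) n q = 0 := by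
  intro n
  induction n with
  | zero =>
    intro q hq
    have : q = 0 := by
      ext m
      exact (Polynomial.degree_lt_iff_coeff_zero q 0).mp hq m (by omega)
    rw [this]; rfl
  | succ n ih =>
    intro q hq
    show fallOp (LOp f) n _ = 0
    rcases eq_or_ne q 0 with rfl | hq0
    · rw [LOp_zero, smul_zero, sub_zero]
      exact ih 0 (by rw [Polynomial.degree_zero]; exact WithBot.bot_lt_coe n)
    · have hnd : q.natDegree ≤ n := by
        have := (Polynomial.natDegree_lt_iff_degree_lt (n := n + 1) hq0).mpr hq
        omega
      apply ih
      rw [Polynomial.degree_lt_iff_coeff_zero]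
      intro m hm
      rw [Polynomial.coeff_sub, Polynomial.coeff_smul, smul_eq_mul]
      rcases lt_or_eq_of_le (show q.natDegree ≤ m by omega) with hlt | heq
      · rw [LOp_coeff_high hf0 hlt, Polynomial.coeff_eq_zero_of_natDegree_lt hlt, mul_zero,
          sub_zero]
      · rw [← heq] at hm ⊢
        have hqn : q.natDegree = n := le_antisymm hnd hm
        rw [LOp_coeff_nd hf0 hf1, Polynomial.leadingCoeff, hqn, sub_self]



lemma LOp_Pb {f F H : PowerSeries ℂ} (hf0 : coeff 0 f = 0) (hf1 : coeff 1 f = 1)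
    (hF0 : coeff 0 F = 0) (hF1 : coeff 1 F = 1)
    (hH0 : coeff 0 H = 0) (hH1 : coeff 1 H = 1)
    (hF : F = f * d⁄dX ℂ F) (hH : pcomp H F = X) (n : ℕ) :
    LOp f (Pb H n) = (n : ℂ) • Pb H n := by
  have hnd : (Pb H n).natDegree = n := (Pb_natDegree hH0 hH1 n).1
  ext j
  rw [Polynomial.coeff_smul, smul_eq_mul]
  cases j with
  | zero =>
    rw [coeff_LOp_zero, coeff_Pb hH0]
    cases n with
    | zero => norm_num
    | succ m =>
      rw [pow_zero, coeff_one, if_neg (by omega)]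
      norm_num
  | succ i =>
    rw [coeff_LOp_succ, hnd, coeff_Pb hH0]
    have hterm : ∀ k ∈ range (n + 1),
        coeff k f * (((i + k).descFactorial k : ℂ) * (Pb H n).coeff (i + k)) =
        ((n.factorial : ℂ) / (i.factorial : ℂ)) * (coeff k f * coeff n (H ^ (i + k))) := by
      intro k _
      rw [coeff_Pb hH0]
      have hdf : ((i.factorial : ℂ)) * (((i + k).descFactorial k : ℂ)) =
          ((i + k).factorial : ℂ) := by
        rw [← Nat.cast_mul, ← Nat.factorial_mul_descFactorial (Nat.le_add_left k i)]
        norm_num [Nat.add_sub_cancel]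
      have h1 : (i.factorial : ℂ) ≠ 0 := by exact_mod_cast i.factorial_ne_zero
      have hD : (((i + k).descFactorial k : ℕ) : ℂ) ≠ 0 := by
        have : (i + k).descFactorial k ≠ 0 := by
          rw [Ne, Nat.descFactorial_eq_zero_iff_lt]
          omega
        exact_mod_cast this
      rw [← hdf]
      field_simp
    rw [Finset.sum_congr rfl hterm, ← Finset.mul_sum]
    have hkey := key_identity hf0 hF0 hF1 hH0 hF hH n (i + 1) (by omega)
    simp only [Nat.add_sub_cancel] at hkey
    have h1 : (i.factorial : ℂ) ≠ 0 := by exact_mod_cast i.factorial_ne_zero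
    have h2 : ((i + 1).factorial : ℂ) ≠ 0 := by exact_mod_cast (i + 1).factorial_ne_zero
    have h3 : ((i : ℂ) + 1) ≠ 0 := by
      have h4 : ((i + 1 : ℕ) : ℂ) ≠ 0 := Nat.cast_ne_zero.mpr (Nat.succ_ne_zero i)
      push_cast at h4
      exact h4
    have hsum : ∑ m ∈ range (n + 1), coeff m f * coeff n (H ^ (i + m)) =
        (n : ℂ) * coeff n (H ^ (i + 1)) / ((i : ℂ) + 1) := by
      rw [eq_div_iff h3, mul_comm _ ((i:ℂ)+1)]
      exact_mod_cast hkey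
    rw [hsum, Nat.factorial_succ]
    push_cast
    field_simp

lemma fallOp_eigen {f F H : PowerSeries ℂ} (hf0 : coeff 0 f = 0) (hf1 : coeff 1 f = 1)
    (hF0 : coeff 0 F = 0) (hF1 : coeff 1 F = 1)
    (hH0 : coeff 0 H = 0) (hH1 : coeff 1 H = 1)
    (hF : F = f * d⁄dX ℂ F) (hH : pcomp H F = X) (n : ℕ) :
    ∀ k, fallOp (LOp f) k (Pb H n) = (∏ i ∈ range k, ((n : ℂ) - i)) • Pb H n := by
  intro k
  induction k with
  | zero => rw [Finset.range_zero, Finset.prod_empty, one_smul]; rfl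
  | succ k ih =>
    show fallOp (LOp f) k _ = _
    rw [LOp_Pb hf0 hf1 hF0 hF1 hH0 hH1 hF hH n, ← sub_smul, fallOp_smul, ih, smul_smul,
      Finset.prod_range_succ]
    ring_nf

lemma prod_range_sub_eq_factorial (n : ℕ) :
    (∏ i ∈ range n, ((n : ℂ) - i)) = (n.factorial : ℂ) := by
  have h1 : ∀ i ∈ range n, ((n : ℂ) - i) = ((n - i : ℕ) : ℂ) := fun i hi => by
    rw [Nat.cast_sub (le_of_lt (mem_range.mp hi))]
  rw [Finset.prod_congr rfl h1, ← Nat.cast_prod]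
  congr 1
  calc ∏ i ∈ range n, (n - i) = ∏ i ∈ range n, (i + 1) := by
        rw [← Finset.prod_range_reflect]
        exact Finset.prod_congr rfl fun j hj => by
          rw [mem_range] at hj; omega
    _ = n.factorial := Finset.prod_range_add_one_eq_factorial n


end S17


/-- **Proposition 3.1.** Let `f ∈ X + X²ℂ[[X]]`, let `F = 𝔗⁻¹f` (normalized,
`F = f·F'`) with compositional inverse `H`, and let
`P_n(α) = n!·Σ_{k≤n} (αᵏ/k!)·coeff_n(Hᵏ)` be the binomial-type polynomials
associated to `𝔗⁻¹f`.  Then for every monic polynomial `q` of degree `n`: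
`n!·P_n = (α·f(D))_n · q`, the falling factorial of the operator `L = α·f(D)`. -/
theorem statement17 (f F H : PowerSeries ℂ)
    (hf0 : coeff 0 f = 0) (hf1 : coeff 1 f = 1)
    (hF0 : coeff 0 F = 0) (hF1 : coeff 1 F = 1)
    (hH0 : coeff 0 H = 0) (hH1 : coeff 1 H = 1)
    (hF : F = f * d⁄dX ℂ F)
    (hH : pcomp H F = X) :
    ∀ (n : ℕ) (q : Polynomial ℂ), q.Monic → q.natDegree = n →
      (n.factorial : ℂ) •
          ((n.factorial : ℂ) •
            ∑ k ∈ range (n + 1),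
              (coeff n (H ^ k) / (k.factorial : ℂ)) • (Polynomial.X ^ k : Polynomial ℂ)) =
        fallOp (LOp f) n q := by

  intro n q hq hdeg
  subst hdeg
  have hPnd := (S17.Pb_natDegree hH0 hH1 q.natDegree).1
  have hPmon := (S17.Pb_natDegree hH0 hH1 q.natDegree).2
  have hLHS : (q.natDegree.factorial : ℂ) • ((q.natDegree.factorial : ℂ) •
      ∑ k ∈ range (q.natDegree + 1),
        (coeff q.natDegree (H ^ k) / (k.factorial : ℂ)) • (Polynomial.X ^ k : Polynomial ℂ)) =
      (q.natDegree.factorial : ℂ) • S17.Pb H q.natDegree := rfl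
  rw [hLHS]
  have hdegsub : (q - S17.Pb H q.natDegree).degree < (q.natDegree : ℕ) := by
    have hd : q.degree = (S17.Pb H q.natDegree).degree := by
      rw [Polynomial.degree_eq_natDegree hq.ne_zero,
        Polynomial.degree_eq_natDegree hPmon.ne_zero, hPnd]
    have := Polynomial.degree_sub_lt hd hq.ne_zero (by rw [hq.leadingCoeff, hPmon.leadingCoeff])
    rwa [Polynomial.degree_eq_natDegree hq.ne_zero] at this
  have hsplit : S17.Pb H q.natDegree + (q - S17.Pb H q.natDegree) = q := by ring
  rw [show fallOp (LOp f) q.natDegree q =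
      fallOp (LOp f) q.natDegree (S17.Pb H q.natDegree + (q - S17.Pb H q.natDegree)) from by
    rw [hsplit]]
  rw [S17.fallOp_add, S17.fallOp_vanish hf0 hf1 q.natDegree _ hdegsub, add_zero,
    S17.fallOp_eigen hf0 hf1 hF0 hF1 hH0 hH1 hF hH q.natDegree q.natDegree,
    S17.prod_range_sub_eq_factorial]
end

section
/- Let f ∈ X + X²ℂ[[X]] with compositional inverse H ∈ X + X²ℂ[[X]] (H∘f = X), and let p_n ∈ ℂ[α] be the associated binomial-type polynomials, p_n(α) := n!·Σ_{k=0}^{n} (αᵏ/k!)·coeff_n(Hᵏ). Let u := f''·(f')⁻¹ ∈ ℂ[[X]] (well-defined since f' is a unit), and for a polynomial P let u(D)P := Σ_k (coeff_k u)·P^{(k)}. Then for every n ≥ 0: p_{n+1}(α) = α · [(M_α − 1·u(D)) ∘ (M_α − 2·u(D)) ∘ ⋯ ∘ (M_α − n·u(D))](1), where M_α is multiplication by α, the factors are composed in the written order (the factor M_α − n·u(D) acts first, on the constant polynomial 1), and the empty composition (n = 0) is the identity. In the paper's notation: p_{n+1}^f(α)/α = (α − f''(D)/f'(D))⋯(α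 − n·f''(D)/f'(D))·1. -/
open PowerSeries Finset

/-- Apply the product of factors `M_α − j·u(D)` for `j` running through the list
(head outermost, so the last element of the list acts first). -/
noncomputable def applyFactors (u : PowerSeries ℂ) : List ℕ → Polynomial ℂ → Polynomial ℂ
  | [], P => P
  | j :: js, P =>
      Polynomial.X * applyFactors u js P - (j : ℂ) • opD u (applyFactors u js P)

namespace S18

lemma pc_coeff (w H : PowerSeries ℂ) (m : ℕ) :
    coeff m (pcomp w H) = ∑ i ∈ range (m + 1), coeff i w * coeff m (H ^ i) := by
  simp [pcomp]

lemma coeff_mul_pow_eq_zero {H : PowerSeries ℂ} (hH0 : coeff 0 H = 0) (g : PowerSeries ℂ)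
    {m i : ℕ} (h : m < i) : coeff m (g * H ^ i) = 0 := by
  have hX : (X : PowerSeries ℂ) ∣ H := X_dvd_iff.mpr (by
    rw [← coeff_zero_eq_constantCoeff_apply]; exact hH0)
  have hd : (X : PowerSeries ℂ) ^ i ∣ g * H ^ i :=
    Dvd.dvd.mul_left (pow_dvd_pow_of_dvd hX i) g
  exact X_pow_dvd_iff.mp hd m h

lemma coeff_pow_eq_zero {H : PowerSeries ℂ} (hH0 : coeff 0 H = 0)
    {m i : ℕ} (h : m < i) : coeff m (H ^ i) = 0 := by
  simpa using coeff_mul_pow_eq_zero hH0 1 h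

lemma coeff_mul_pcomp {H : PowerSeries ℂ} (hH0 : coeff 0 H = 0) (g w : PowerSeries ℂ)
    (m : ℕ) :
    coeff m (g * pcomp w H) = ∑ i ∈ range (m + 1), coeff i w * coeff m (g * H ^ i) := by
  rw [coeff_mul]
  have step : ∀ p ∈ antidiagonal m,
      coeff p.1 g * coeff p.2 (pcomp w H)
        = ∑ i ∈ range (m + 1), coeff i w * (coeff p.1 g * coeff p.2 (H ^ i)) := by
    intro p hp
    have hp2 : p.2 ≤ m := by
      have := Finset.HasAntidiagonal.mem_antidiagonal.mp hp; omega
    rw [pc_coeff, Finset.mul_sum]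
    refine (Finset.sum_subset (by
        intro x hx; simp only [Finset.mem_range] at hx ⊢; omega) ?_).trans
      (Finset.sum_congr rfl fun i _ => by ring)
    intro i hi hni
    simp only [Finset.mem_range, not_lt] at hni
    rw [coeff_pow_eq_zero hH0 (by omega : p.2 < i)]
    ring
  rw [Finset.sum_congr rfl step, Finset.sum_comm]
  refine Finset.sum_congr rfl fun i _ => ?_
  rw [coeff_mul, Finset.mul_sum]


lemma triangle_sum (m : ℕ) (F : ℕ → ℕ → ℂ) (hF : ∀ i j, m < i + j → F i j = 0) :
    ∑ k ∈ range (m + 1), ∑ p ∈ antidiagonal k, F p.1 p.2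
      = ∑ i ∈ range (m + 1), ∑ j ∈ range (m + 1), F i j := by
  rw [← Finset.sum_product']
  set s := (range (m + 1)) ×ˢ (range (m + 1)) with hs
  have h2 : ∑ p ∈ s, F p.1 p.2 = ∑ p ∈ s.filter (fun p => p.1 + p.2 ≤ m), F p.1 p.2 :=
    (Finset.sum_filter_of_ne (fun p _ h => by
      by_contra hc; exact h (hF _ _ (not_le.mp hc)))).symm
  have hmap : ∀ p ∈ s.filter (fun p => p.1 + p.2 ≤ m), p.1 + p.2 ∈ range (m + 1) := by
    intro p hp
    simp only [Finset.mem_filter] at hp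
    simp [Nat.lt_succ_iff, hp.2]
  have hfib := Finset.sum_fiberwise_of_maps_to hmap (fun p => F p.1 p.2)
  rw [h2, ← hfib]
  refine Finset.sum_congr rfl fun k hk => ?_
  refine Finset.sum_congr ?_ fun _ _ => rfl
  ext p
  simp only [Finset.mem_filter, Finset.HasAntidiagonal.mem_antidiagonal, Finset.mem_product, Finset.mem_range,
    hs, Finset.mem_range] at *
  omega

lemma pcomp_mul {H : PowerSeries ℂ} (hH0 : coeff 0 H = 0) (a b : PowerSeries ℂ) :
    pcomp (a * b) H = pcomp a H * pcomp b H := by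
  ext m
  rw [pc_coeff, mul_comm (pcomp a H), coeff_mul_pcomp hH0]
  have step2 : ∀ i ∈ range (m + 1), coeff i a * coeff m (pcomp b H * H ^ i)
      = ∑ j ∈ range (m + 1), coeff i a * (coeff j b * coeff m (H ^ (i + j))) := by
    intro i _
    rw [mul_comm (pcomp b H), coeff_mul_pcomp hH0, Finset.mul_sum]
    exact Finset.sum_congr rfl fun j _ => by rw [pow_add]
  rw [Finset.sum_congr rfl step2]
  have lhs : ∑ k ∈ range (m + 1), coeff k (a * b) * coeff m (H ^ k)
      = ∑ k ∈ range (m + 1), ∑ p ∈ antidiagonal k,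
          (coeff p.1 a * coeff p.2 b * coeff m (H ^ (p.1 + p.2))) := by
    refine Finset.sum_congr rfl fun k hk => ?_
    rw [coeff_mul, Finset.sum_mul]
    refine Finset.sum_congr rfl fun p hp => ?_
    rw [Finset.HasAntidiagonal.mem_antidiagonal.mp hp]
  rw [lhs, triangle_sum m (fun i j => coeff i a * coeff j b * coeff m (H ^ (i + j)))
    (fun i j hij => by show _ * _ * _ = (0:ℂ); rw [coeff_pow_eq_zero hH0 hij]; ring)]
  exact Finset.sum_congr rfl fun i _ => Finset.sum_congr rfl fun j _ => by ring

lemma pcomp_one (H : PowerSeries ℂ) : pcomp 1 H = 1 := by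
  ext m
  rw [pc_coeff]
  rw [Finset.sum_eq_single 0]
  · simp
  · intro i _ hi
    rw [coeff_one]
    simp [hi]
  · intro h; simp at h

lemma pcomp_X {H : PowerSeries ℂ} (hH0 : coeff 0 H = 0) : pcomp X H = H := by
  ext m
  rw [pc_coeff]
  rw [Finset.sum_eq_single 1]
  · simp
  · intro i _ hi
    rw [coeff_X]
    simp [hi]
  · intro h
    simp only [Finset.mem_range, not_lt, Nat.lt_succ_iff] at h
    interval_cases m
    simpa using hH0

lemma pcomp_pow {H : PowerSeries ℂ} (hH0 : coeff 0 H = 0) (a : PowerSeries ℂ) (i : ℕ) :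
    pcomp (a ^ i) H = (pcomp a H) ^ i := by
  induction i with
  | zero => simpa using pcomp_one H
  | succ n ih => rw [pow_succ, pow_succ, pcomp_mul hH0, ih]

lemma pcomp_X_right (a : PowerSeries ℂ) : pcomp a X = a := by
  ext m
  rw [pc_coeff]
  rw [Finset.sum_eq_single m]
  · rw [← pow_one ((X : PowerSeries ℂ)) ]
    simp [← pow_mul, coeff_X_pow]
  · intro i _ hi
    rw [coeff_X_pow]
    simp [hi, Ne.symm hi]
  · intro h; simp at h

lemma pcomp_sub (H a b : PowerSeries ℂ) : pcomp (a - b) H = pcomp a H - pcomp b H := by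
  ext m
  simp [pc_coeff, sub_mul, Finset.sum_sub_distrib]

lemma pcomp_assoc {H f : PowerSeries ℂ} (hH0 : coeff 0 H = 0) (hf0 : coeff 0 f = 0)
    (a : PowerSeries ℂ) :
    pcomp (pcomp a H) f = pcomp a (pcomp H f) := by
  ext m
  rw [pc_coeff, pc_coeff]
  have rhs : ∀ i ∈ range (m + 1), coeff i a * coeff m ((pcomp H f) ^ i)
      = ∑ k ∈ range (m + 1), coeff i a * (coeff k (H ^ i) * coeff m (f ^ k)) := by
    intro i _
    rw [← pcomp_pow hf0, pc_coeff, Finset.mul_sum]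
  rw [Finset.sum_congr rfl rhs]
  have lhs : ∀ k ∈ range (m + 1), coeff k (pcomp a H) * coeff m (f ^ k)
      = ∑ i ∈ range (m + 1), coeff i a * (coeff k (H ^ i) * coeff m (f ^ k)) := by
    intro k hk
    have hk' : k ≤ m := Nat.lt_succ_iff.mp (Finset.mem_range.mp hk)
    rw [pc_coeff, Finset.sum_mul]
    refine (Finset.sum_subset (by
        intro x hx; simp only [Finset.mem_range] at hx ⊢; omega) ?_).trans
      (Finset.sum_congr rfl fun i _ => by ring)
    intro i _ hni
    simp only [Finset.mem_range, not_lt] at hni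
    rw [coeff_pow_eq_zero hH0 (by omega : k < i)]
    ring
  rw [Finset.sum_congr rfl lhs, Finset.sum_comm]

lemma coeff_self_pow {f : PowerSeries ℂ} (hf0 : coeff 0 f = 0) (hf1 : coeff 1 f = 1)
    (m : ℕ) : coeff m (f ^ m) = 1 := by
  obtain ⟨g, hg⟩ := (show (X : PowerSeries ℂ) ∣ f from X_dvd_iff.mpr (by
    rw [← coeff_zero_eq_constantCoeff_apply]; exact hf0))
  have hg0 : constantCoeff g = 1 := by
    rw [hg, coeff_succ_X_mul 0] at hf1
    rw [← coeff_zero_eq_constantCoeff_apply]; exact hf1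
  rw [hg, mul_pow]
  have h3 : coeff (0 + m) ((X : PowerSeries ℂ) ^ m * g ^ m) = coeff 0 (g ^ m) :=
    coeff_X_pow_mul (g ^ m) m 0
  rw [zero_add] at h3
  rw [h3, coeff_zero_eq_constantCoeff_apply, map_pow, hg0, one_pow]

lemma pcomp_eq_zero {f : PowerSeries ℂ} (hf0 : coeff 0 f = 0) (hf1 : coeff 1 f = 1)
    {w : PowerSeries ℂ} (h : pcomp w f = 0) : w = 0 := by
  have key : ∀ m, coeff m w = 0 := by
    intro m
    induction m using Nat.strong_induction_on with
    | _ m ih =>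
      have h1 : coeff m (pcomp w f) = 0 := by rw [h]; simp
      rw [pc_coeff, Finset.sum_range_succ] at h1
      have hz : ∀ k ∈ range m, coeff k w * coeff m (f ^ k) = 0 := fun k hk => by
        rw [ih k (Finset.mem_range.mp hk)]; ring
      rw [Finset.sum_eq_zero hz, zero_add, coeff_self_pow hf0 hf1, mul_one] at h1
      exact h1
  ext m; rw [key]; simp

lemma deriv_pow_succ (H : PowerSeries ℂ) (i : ℕ) :
    d⁄dX ℂ (H ^ (i + 1)) = ((i : ℂ) + 1) • (H ^ i * d⁄dX ℂ H) := by
  rw [Derivation.leibniz_pow]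
  simp only [Nat.add_sub_cancel, smul_eq_mul, nsmul_eq_mul]
  rw [PowerSeries.smul_eq_C_mul, map_add, map_one, map_natCast]
  push_cast
  ring

lemma pcomp_deriv {H : PowerSeries ℂ} (hH0 : coeff 0 H = 0) (a : PowerSeries ℂ) :
    d⁄dX ℂ (pcomp a H) = pcomp (d⁄dX ℂ a) H * d⁄dX ℂ H := by
  ext m
  rw [coeff_derivative, mul_comm (pcomp (d⁄dX ℂ a) H), coeff_mul_pcomp hH0, pc_coeff]
  rw [Finset.sum_range_succ']
  have hz : coeff 0 a * coeff (m + 1) ((H : PowerSeries ℂ) ^ 0) = 0 := by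
    simp
  rw [hz, add_zero, Finset.sum_mul]
  refine Finset.sum_congr rfl fun i _ => ?_
  have h1 : coeff i (d⁄dX ℂ a) = coeff (i + 1) a * ((i : ℂ) + 1) := by
    rw [coeff_derivative]
  have h2 : coeff (m + 1) (H ^ (i + 1)) * ((m : ℂ) + 1)
      = ((i : ℂ) + 1) * coeff m (H ^ i * d⁄dX ℂ H) := by
    have h3 : coeff m (d⁄dX ℂ (H ^ (i + 1))) = coeff (m + 1) (H ^ (i + 1)) * ((m : ℂ) + 1) := by
      rw [coeff_derivative]
    rw [← h3, deriv_pow_succ, map_smul, smul_eq_mul]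
  have h4 : d⁄dX ℂ H * H ^ i = H ^ i * d⁄dX ℂ H := mul_comm _ _
  rw [h4, h1]
  calc coeff (i + 1) a * coeff (m + 1) (H ^ (i + 1)) * ((m : ℂ) + 1)
      = coeff (i + 1) a * (coeff (m + 1) (H ^ (i + 1)) * ((m : ℂ) + 1)) := by ring
    _ = coeff (i + 1) a * (((i : ℂ) + 1) * coeff m (H ^ i * d⁄dX ℂ H)) := by rw [h2]
    _ = coeff (i + 1) a * ((i : ℂ) + 1) * coeff m (H ^ i * d⁄dX ℂ H) := by ring

lemma WKey {f H u : PowerSeries ℂ}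
    (hf0 : coeff 0 f = 0) (hf1 : coeff 1 f = 1)
    (hH0 : coeff 0 H = 0)
    (hH : pcomp H f = X)
    (hu : u * d⁄dX ℂ f = d⁄dX ℂ (d⁄dX ℂ f)) :
    pcomp u H * (d⁄dX ℂ H) ^ 2 + d⁄dX ℂ (d⁄dX ℂ H) = 0 := by
  have hfH : pcomp f H = X := by
    have h1 : pcomp (pcomp f H) f = pcomp X f := by
      rw [pcomp_assoc hH0 hf0, hH, pcomp_X_right, pcomp_X hf0]
    have h2 : pcomp (pcomp f H - X) f = 0 := by rw [pcomp_sub, h1, sub_self]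
    exact sub_eq_zero.mp (pcomp_eq_zero hf0 hf1 h2)
  have E1 : pcomp (d⁄dX ℂ f) H * d⁄dX ℂ H = 1 := by
    have h := congrArg (d⁄dX ℂ) hfH
    rw [pcomp_deriv hH0, derivative_X] at h
    exact h
  have E2 : pcomp (d⁄dX ℂ f) H * d⁄dX ℂ (d⁄dX ℂ H)
      + d⁄dX ℂ H * (pcomp (d⁄dX ℂ (d⁄dX ℂ f)) H * d⁄dX ℂ H) = 0 := by
    have h := congrArg (d⁄dX ℂ) E1
    rw [Derivation.leibniz, Derivation.map_one_eq_zero, pcomp_deriv hH0] at h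
    simpa only [smul_eq_mul] using h
  have husub : pcomp u H * pcomp (d⁄dX ℂ f) H = pcomp (d⁄dX ℂ (d⁄dX ℂ f)) H := by
    rw [← pcomp_mul hH0, hu]
  have hAV : pcomp (d⁄dX ℂ f) H * (pcomp u H * (d⁄dX ℂ H) ^ 2 + d⁄dX ℂ (d⁄dX ℂ H)) = 0 := by
    linear_combination E2 + (d⁄dX ℂ H) ^ 2 * husub
  linear_combination (d⁄dX ℂ H) * hAV
    - (pcomp u H * (d⁄dX ℂ H) ^ 2 + d⁄dX ℂ (d⁄dX ℂ H)) * E1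


noncomputable def polyP (H : PowerSeries ℂ) (m : ℕ) (g : PowerSeries ℂ) : Polynomial ℂ :=
  ∑ k ∈ range (m + 1),
    (coeff m (g * H ^ k) / (k.factorial : ℂ)) • (Polynomial.X ^ k : Polynomial ℂ)

lemma coeff_sum_smul (N : ℕ) (c : ℕ → ℂ) (j : ℕ) :
    (∑ k ∈ range N, c k • (Polynomial.X ^ k : Polynomial ℂ)).coeff j
      = if j < N then c j else 0 := by
  rw [Polynomial.finset_sum_coeff]
  simp_rw [Polynomial.coeff_smul, Polynomial.coeff_X_pow, smul_eq_mul, mul_ite, mul_one, mul_zero]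
  rw [Finset.sum_ite_eq (range N) j c]
  simp [Finset.mem_range]

lemma polyP_coeff (H : PowerSeries ℂ) (m : ℕ) (g : PowerSeries ℂ) (j : ℕ) :
    (polyP H m g).coeff j
      = if j ≤ m then coeff m (g * H ^ j) / (j.factorial : ℂ) else 0 := by
  rw [polyP, coeff_sum_smul]
  simp [Nat.lt_succ_iff]

lemma polyP_natDegree_le (H : PowerSeries ℂ) (m : ℕ) (g : PowerSeries ℂ) :
    (polyP H m g).natDegree ≤ m :=
  Polynomial.natDegree_le_iff_coeff_eq_zero.mpr fun j hj => by
    rw [polyP_coeff, if_neg (by omega)]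

lemma opD_eq (u' : PowerSeries ℂ) (P : Polynomial ℂ) (N : ℕ) (h : P.natDegree ≤ N) :
    opD u' P = ∑ k ∈ range (N + 1), coeff k u' • (Polynomial.derivative^[k] P) := by
  unfold opD
  apply Finset.sum_subset
  · exact Finset.range_subset_range.mpr (by omega)
  · intro k _ hk
    simp only [Finset.mem_range, not_lt] at hk
    rw [Polynomial.iterate_derivative_eq_zero (by omega), smul_zero]

lemma opD_smul (u' : PowerSeries ℂ) (c : ℂ) (P : Polynomial ℂ) :
    opD u' (c • P) = c • opD u' P := by
  rw [opD_eq u' (c • P) P.natDegree (Polynomial.natDegree_smul_le c P),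
    opD_eq u' P P.natDegree le_rfl, Finset.smul_sum]
  refine Finset.sum_congr rfl fun k _ => ?_
  rw [Polynomial.iterate_derivative_smul, smul_comm]

lemma opD_polyP {H : PowerSeries ℂ} (hH0 : coeff 0 H = 0) (u' g : PowerSeries ℂ) (m : ℕ) :
    opD u' (polyP H m g) = polyP H m (g * pcomp u' H) := by
  rw [opD_eq u' _ m (polyP_natDegree_le H m g)]
  ext j
  rw [Polynomial.finset_sum_coeff]
  simp_rw [Polynomial.coeff_smul, Polynomial.coeff_iterate_derivative, polyP_coeff,
    smul_eq_mul, nsmul_eq_mul]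
  by_cases hj : j ≤ m
  · rw [if_pos hj,
      show g * pcomp u' H * H ^ j = (g * H ^ j) * pcomp u' H by ring,
      coeff_mul_pcomp hH0, Finset.sum_div]
    refine Finset.sum_congr rfl fun k hk => ?_
    have hpow : g * H ^ j * H ^ k = g * H ^ (j + k) := by rw [mul_assoc, ← pow_add]
    by_cases hjk : j + k ≤ m
    · rw [if_pos hjk, hpow]
      have hfact : ((j + k).factorial : ℂ) = (j.factorial : ℂ) * ((j + k).descFactorial k : ℂ) := by
        have := Nat.factorial_mul_descFactorial (Nat.le_add_left k j)
        rw [Nat.add_sub_cancel] at this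
        exact_mod_cast this.symm
      have h5 : ((j + k).factorial : ℂ) ≠ 0 := Nat.cast_ne_zero.mpr (Nat.factorial_ne_zero _)
      have h6 : (j.factorial : ℂ) ≠ 0 := Nat.cast_ne_zero.mpr (Nat.factorial_ne_zero _)
      field_simp
      rw [hfact]
      ring
    · rw [if_neg hjk, hpow, coeff_mul_pow_eq_zero hH0 g (by omega)]
      simp
  · rw [if_neg hj]
    refine Finset.sum_eq_zero fun k hk => ?_
    rw [if_neg (by omega)]
    simp

lemma coeff_deriv' (W : PowerSeries ℂ) (m : ℕ) :
    ((m : ℂ) + 1) * coeff (m + 1) W = coeff m (d⁄dX ℂ W) := by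
  rw [coeff_derivative]; ring

lemma deriv_coeff_fact (H : PowerSeries ℂ) (m a b : ℕ) :
    ((m : ℂ) + 1) * coeff (m + 1) ((d⁄dX ℂ H) ^ (a + 1) * H ^ b)
      = ((a : ℂ) + 1) * coeff m ((d⁄dX ℂ H) ^ a * d⁄dX ℂ (d⁄dX ℂ H) * H ^ b)
        + (b : ℂ) * coeff m ((d⁄dX ℂ H) ^ (a + 2) * H ^ (b - 1)) := by
  rw [coeff_deriv']
  cases b with
  | zero =>
    simp only [pow_zero, mul_one, Nat.cast_zero, zero_mul, add_zero]
    rw [deriv_pow_succ, map_smul, smul_eq_mul]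
  | succ b' =>
    have hser : d⁄dX ℂ ((d⁄dX ℂ H) ^ (a + 1) * H ^ (b' + 1))
        = ((a : ℂ) + 1) • ((d⁄dX ℂ H) ^ a * d⁄dX ℂ (d⁄dX ℂ H) * H ^ (b' + 1))
          + ((b' : ℂ) + 1) • ((d⁄dX ℂ H) ^ (a + 2) * H ^ b') := by
      rw [Derivation.leibniz, deriv_pow_succ, deriv_pow_succ]
      simp only [smul_eq_mul, PowerSeries.smul_eq_C_mul]
      ring
    rw [hser, map_add, map_smul, map_smul, smul_eq_mul, smul_eq_mul]
    push_cast
    ring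

lemma keyStep {H u : PowerSeries ℂ} (hH0 : coeff 0 H = 0)
    (hW : pcomp u H * (d⁄dX ℂ H) ^ 2 + d⁄dX ℂ (d⁄dX ℂ H) = 0) (m jj : ℕ) :
    Polynomial.X * polyP H m ((d⁄dX ℂ H) ^ (jj + 2))
      - ((jj : ℂ) + 1) • polyP H m ((d⁄dX ℂ H) ^ (jj + 2) * pcomp u H)
      = ((m : ℂ) + 1) • polyP H (m + 1) ((d⁄dX ℂ H) ^ (jj + 1)) := by
  have harg : (d⁄dX ℂ H) ^ (jj + 2) * pcomp u H
      = -((d⁄dX ℂ H) ^ jj * d⁄dX ℂ (d⁄dX ℂ H)) := by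
    linear_combination ((d⁄dX ℂ H) ^ jj) * hW
  rw [harg]
  ext j
  cases j with
  | zero =>
    rw [Polynomial.coeff_sub, Polynomial.mul_coeff_zero, Polynomial.coeff_X_zero, zero_mul,
      Polynomial.coeff_smul, Polynomial.coeff_smul, polyP_coeff, polyP_coeff,
      if_pos (Nat.zero_le m), if_pos (Nat.zero_le (m + 1))]
    have hF := deriv_coeff_fact H m jj 0
    simp only [pow_zero, mul_one, Nat.cast_zero, zero_mul, add_zero] at hF
    simp only [pow_zero, mul_one, Nat.factorial_zero, Nat.cast_one, div_one, smul_eq_mul,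
      map_neg]
    linear_combination -hF
  | succ j' =>
    rw [Polynomial.coeff_sub, Polynomial.coeff_X_mul, Polynomial.coeff_smul,
      Polynomial.coeff_smul, polyP_coeff, polyP_coeff, polyP_coeff]
    simp only [smul_eq_mul, neg_mul, map_neg]
    have hF := deriv_coeff_fact H m jj (j' + 1)
    simp only [Nat.succ_sub_one, Nat.add_sub_cancel] at hF
    have hfs : ((j' + 1).factorial : ℂ) = ((j' : ℂ) + 1) * (j'.factorial : ℂ) := by
      rw [Nat.factorial_succ]; push_cast; ring
    have h6 : (j'.factorial : ℂ) ≠ 0 := Nat.cast_ne_zero.mpr (Nat.factorial_ne_zero _)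
    have h7 : ((j' + 1).factorial : ℂ) ≠ 0 := Nat.cast_ne_zero.mpr (Nat.factorial_ne_zero _)
    have hne : ((j' : ℂ) + 1) ≠ 0 := Nat.cast_add_one_ne_zero j'
    by_cases h2 : j' + 1 ≤ m
    · rw [if_pos (by omega : j' ≤ m), if_pos h2, if_pos (by omega : j' + 1 ≤ m + 1)]
      push_cast at hF
      set A := coeff m ((d⁄dX ℂ H) ^ (jj + 2) * H ^ j') with hA
      set B := coeff m ((d⁄dX ℂ H) ^ jj * d⁄dX ℂ (d⁄dX ℂ H) * H ^ (j' + 1)) with hB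
      set C := coeff (m + 1) ((d⁄dX ℂ H) ^ (jj + 1) * H ^ (j' + 1)) with hC
      have e1 : (((j' : ℂ) + 1) * A) / ((j' + 1).factorial : ℂ) = A / (j'.factorial : ℂ) := by
        rw [hfs, mul_div_mul_left _ _ hne]
      rw [← e1]
      have e2 : ((jj : ℂ) + 1) * (-B / ((j' + 1).factorial : ℂ))
          = (-(((jj : ℂ) + 1) * B)) / ((j' + 1).factorial : ℂ) := by ring
      have e3 : ((m : ℂ) + 1) * (C / ((j' + 1).factorial : ℂ))
          = (((m : ℂ) + 1) * C) / ((j' + 1).factorial : ℂ) := by ring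
      rw [e2, e3, div_sub_div_same]
      have e4 : ((j' : ℂ) + 1) * A - -(((jj : ℂ) + 1) * B) = ((m : ℂ) + 1) * C := by
        linear_combination -hF
      rw [e4]
    · by_cases h1 : j' ≤ m
      · rw [if_pos h1, if_neg h2, if_pos (by omega : j' + 1 ≤ m + 1)]
        have hm : j' = m := by omega
        subst hm
        have hzB : coeff j' ((d⁄dX ℂ H) ^ jj * d⁄dX ℂ (d⁄dX ℂ H) * H ^ (j' + 1)) = 0 :=
          coeff_mul_pow_eq_zero hH0 _ (by omega)
        rw [hzB, mul_zero, zero_add] at hF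
        push_cast at hF
        have hCA : coeff (j' + 1) ((d⁄dX ℂ H) ^ (jj + 1) * H ^ (j' + 1))
            = coeff j' ((d⁄dX ℂ H) ^ (jj + 2) * H ^ j') :=
          mul_left_cancel₀ hne (by linear_combination hF)
        rw [mul_zero, sub_zero, hCA, hfs, ← mul_div_assoc, mul_div_mul_left _ _ hne]
      · rw [if_neg h1, if_neg h2, if_neg (by omega : ¬ j' + 1 ≤ m + 1)]
        simp

lemma stepFull {H u : PowerSeries ℂ} (hH0 : coeff 0 H = 0)
    (hW : pcomp u H * (d⁄dX ℂ H) ^ 2 + d⁄dX ℂ (d⁄dX ℂ H) = 0) (t jj : ℕ) :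
    Polynomial.X * ((t.factorial : ℂ) • polyP H t ((d⁄dX ℂ H) ^ (jj + 2)))
      - (((jj + 1 : ℕ) : ℂ)) • opD u ((t.factorial : ℂ) • polyP H t ((d⁄dX ℂ H) ^ (jj + 2)))
      = ((t + 1).factorial : ℂ) • polyP H (t + 1) ((d⁄dX ℂ H) ^ (jj + 1)) := by
  rw [opD_smul, opD_polyP hH0]
  have hk := keyStep hH0 hW t jj
  have hfs : (((t + 1).factorial : ℂ)) = ((t : ℂ) + 1) * (t.factorial : ℂ) := by
    rw [Nat.factorial_succ]; push_cast; ring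
  simp only [Polynomial.smul_eq_C_mul] at hk ⊢
  rw [hfs, map_mul]
  push_cast
  linear_combination (Polynomial.C ((t.factorial : ℂ))) * hk

lemma mainInd {H u : PowerSeries ℂ} (hH0 : coeff 0 H = 0) (hH1 : coeff 1 H = 1)
    (hW : pcomp u H * (d⁄dX ℂ H) ^ 2 + d⁄dX ℂ (d⁄dX ℂ H) = 0) (n : ℕ) :
    ∀ t, t ≤ n → applyFactors u (List.map (fun i => i + (n - t) + 1) (List.range t)) 1
      = (t.factorial : ℂ) • polyP H t ((d⁄dX ℂ H) ^ (n - t + 1)) := by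
  intro t
  induction t with
  | zero =>
    intro _
    have hc : constantCoeff (d⁄dX ℂ H) = 1 := by
      rw [← coeff_zero_eq_constantCoeff_apply, coeff_derivative]
      simpa using hH1
    simp [applyFactors, polyP, Finset.sum_range_one, hc]
  | succ t ih =>
    intro hle
    rw [List.range_succ_eq_map, List.map_cons, List.map_map]
    have hfun : ((fun i => i + (n - (t + 1)) + 1) ∘ Nat.succ) = (fun i => i + (n - t) + 1) := by
      funext i
      simp only [Function.comp_apply]
      omega
    rw [hfun]
    show Polynomial.X * applyFactors u (List.map (fun i => i + (n - t) + 1) (List.range t)) 1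
        - ((0 + (n - (t + 1)) + 1 : ℕ) : ℂ) •
          opD u (applyFactors u (List.map (fun i => i + (n - t) + 1) (List.range t)) 1)
      = _
    rw [ih (by omega)]
    have e1 : n - t + 1 = (n - t - 1) + 2 := by omega
    have e2 : 0 + (n - (t + 1)) + 1 = (n - t - 1) + 1 := by omega
    have e3 : n - (t + 1) + 1 = (n - t - 1) + 1 := by omega
    rw [e1, e2, e3]
    exact stepFull hH0 hW t (n - t - 1)

end S18

open S18

/-- **Proposition 3.3, formula (3.3).** Let `f ∈ X + X²ℂ[[X]]` with compositional
inverse `H`, let `p_n(α) = n!·Σ_{k≤n} (αᵏ/k!)·coeff_n(Hᵏ)` be the associated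
binomial-type polynomials, and let `u = f''/f'` (i.e. `u·f' = f''`).  Then for
every `n ≥ 0`:
`p_{n+1}(α) = α·(α − 1·f''(D)/f'(D))·(α − 2·f''(D)/f'(D))⋯(α − n·f''(D)/f'(D))·1`,
the factor `α − n·f''(D)/f'(D)` acting first on the constant polynomial `1`. -/
theorem statement18 (f H : PowerSeries ℂ)
    (hf0 : coeff 0 f = 0) (hf1 : coeff 1 f = 1)
    (hH0 : coeff 0 H = 0) (hH1 : coeff 1 H = 1)
    (hH : pcomp H f = X)
    (u : PowerSeries ℂ)
    (hu : u * d⁄dX ℂ f = d⁄dX ℂ (d⁄dX ℂ f)) :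
    ∀ n : ℕ,
      ((n + 1).factorial : ℂ) •
          ∑ k ∈ range (n + 2),
            (coeff (n + 1) (H ^ k) / (k.factorial : ℂ)) • (Polynomial.X ^ k : Polynomial ℂ) =
        Polynomial.X * applyFactors u ((List.range n).map (· + 1)) 1 := by
  intro n
  have hW := WKey hf0 hf1 hH0 hH hu
  have hmain := mainInd hH0 hH1 hW n n le_rfl
  simp only [Nat.sub_self, add_zero, pow_one, zero_add] at hmain
  rw [show (List.range n).map (· + 1) = List.map (fun i => i + 0 + 1) (List.range n) by simp]
  rw [hmain]
  ext j
  rw [Polynomial.coeff_smul, coeff_sum_smul, smul_eq_mul]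
  cases j with
  | zero =>
    rw [Polynomial.mul_coeff_zero, Polynomial.coeff_X_zero, zero_mul]
    rw [if_pos (by omega : 0 < n + 2)]
    simp
  | succ j' =>
    rw [Polynomial.coeff_X_mul, Polynomial.coeff_smul, polyP_coeff, smul_eq_mul]
    by_cases hj : j' ≤ n
    · rw [if_pos (by omega : j' + 1 < n + 2), if_pos hj]
      have hD : ((n : ℂ) + 1) * coeff (n + 1) (H ^ (j' + 1))
          = ((j' : ℂ) + 1) * coeff n (H ^ j' * d⁄dX ℂ H) := by
        rw [coeff_deriv', deriv_pow_succ, map_smul, smul_eq_mul]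
      have hcomm : d⁄dX ℂ H * H ^ j' = H ^ j' * d⁄dX ℂ H := mul_comm _ _
      rw [hcomm]
      have hfn : ((n + 1).factorial : ℂ) = ((n : ℂ) + 1) * (n.factorial : ℂ) := by
        rw [Nat.factorial_succ]; push_cast; ring
      have hfj : ((j' + 1).factorial : ℂ) = ((j' : ℂ) + 1) * (j'.factorial : ℂ) := by
        rw [Nat.factorial_succ]; push_cast; ring
      have h1 : ((j' + 1).factorial : ℂ) ≠ 0 := Nat.cast_ne_zero.mpr (Nat.factorial_ne_zero _)
      have h2 : (j'.factorial : ℂ) ≠ 0 := Nat.cast_ne_zero.mpr (Nat.factorial_ne_zero _)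
      rw [mul_div_assoc', mul_div_assoc', div_eq_div_iff h1 h2]
      rw [hfn, hfj]
      linear_combination ((n.factorial : ℂ) * (j'.factorial : ℂ)) * hD
    · rw [if_neg (by omega : ¬ j' + 1 < n + 2), if_neg hj]
      simp
end
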